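/- Let K be a field containing an element ω of multiplicative order 6, and let G = (C6 × C2) ⋊ C2 act on K[x1,x2,t] where a·x1 = ω^{-1}x1, a·x2 = ωx2, a·t = t; b·x1 = x1, b·x2 = −x2, b·t = −t; c·x1 = x2, c·x2 = x1, c·t = −t (G generated by a of order 6, b,c of order 2 with ba=ab, cac=a^{-1}, cbc=a^3b). Then the invariant ring K[x1,x2,t]^G is generated by (x1x2)^2, x1^6 + x2^6, t^2, and (x1^6 − x2^6)x1x2t. -/
import Mathlib


open MvPolynomial

namespace StmtAux

variable {K : Type*} [Field K]

def gens (K : Type*) [Field K] : Set (MvPolynomial (Fin 3) K) :=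
  {(X 0 * X 1) ^ 2, X 0 ^ 6 + X 1 ^ 6, X 2 ^ 2, (X 0 ^ 6 - X 1 ^ 6) * (X 0 * X 1) * X 2}

noncomputable abbrev AA (K : Type*) [Field K] : Subalgebra K (MvPolynomial (Fin 3) K) :=
  Algebra.adjoin K (gens K)

lemma mem_u : (X 0 * X 1) ^ 2 ∈ AA K := Algebra.subset_adjoin (by simp [gens])
lemma mem_p : (X 0 : MvPolynomial (Fin 3) K) ^ 6 + X 1 ^ 6 ∈ AA K :=
  Algebra.subset_adjoin (by simp [gens])
lemma mem_s : (X 2 : MvPolynomial (Fin 3) K) ^ 2 ∈ AA K := Algebra.subset_adjoin (by simp [gens])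
lemma mem_w : ((X 0 : MvPolynomial (Fin 3) K) ^ 6 - X 1 ^ 6) * (X 0 * X 1) * X 2 ∈ AA K :=
  Algebra.subset_adjoin (by simp [gens])

lemma qmem : ∀ m : ℕ, (X 0 : MvPolynomial (Fin 3) K) ^ (6*m) + X 1 ^ (6*m) ∈ AA K := by
  have key : ∀ m : ℕ,
      ((X 0 : MvPolynomial (Fin 3) K) ^ (6*m) + X 1 ^ (6*m) ∈ AA K) ∧
      ((X 0 : MvPolynomial (Fin 3) K) ^ (6*(m+1)) + X 1 ^ (6*(m+1)) ∈ AA K) := by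
    intro m
    induction m with
    | zero =>
      constructor
      · simpa using Subalgebra.add_mem _ (Subalgebra.one_mem _) (Subalgebra.one_mem _)
      · simpa using mem_p
    | succ m ih =>
      refine ⟨ih.2, ?_⟩
      have h : (X 0 : MvPolynomial (Fin 3) K) ^ (6*(m+2)) + X 1 ^ (6*(m+2)) =
          (X 0 ^ 6 + X 1 ^ 6) * (X 0 ^ (6*(m+1)) + X 1 ^ (6*(m+1)))
          - ((X 0 * X 1) ^ 2) ^ 3 * (X 0 ^ (6*m) + X 1 ^ (6*m)) := by ring
      rw [h]
      exact Subalgebra.sub_mem _ (Subalgebra.mul_mem _ mem_p ih.2)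
        (Subalgebra.mul_mem _ (Subalgebra.pow_mem _ mem_u 3) ih.1)
  exact fun m => (key m).1

lemma rmem : ∀ m : ℕ,
    ((X 0 : MvPolynomial (Fin 3) K) ^ (6*m) - X 1 ^ (6*m)) * (X 0 * X 1) * X 2 ∈ AA K := by
  have key : ∀ m : ℕ,
      (((X 0 : MvPolynomial (Fin 3) K) ^ (6*m) - X 1 ^ (6*m)) * (X 0 * X 1) * X 2 ∈ AA K) ∧
      (((X 0 : MvPolynomial (Fin 3) K) ^ (6*(m+1)) - X 1 ^ (6*(m+1))) * (X 0 * X 1) * X 2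
        ∈ AA K) := by
    intro m
    induction m with
    | zero =>
      constructor
      · simpa using Subalgebra.zero_mem (AA K)
      · simpa using mem_w
    | succ m ih =>
      refine ⟨ih.2, ?_⟩
      have h : ((X 0 : MvPolynomial (Fin 3) K) ^ (6*(m+2)) - X 1 ^ (6*(m+2))) * (X 0 * X 1) * X 2 =
          (X 0 ^ 6 + X 1 ^ 6) * ((X 0 ^ (6*(m+1)) - X 1 ^ (6*(m+1))) * (X 0 * X 1) * X 2)
          - ((X 0 * X 1) ^ 2) ^ 3 * ((X 0 ^ (6*m) - X 1 ^ (6*m)) * (X 0 * X 1) * X 2) := by ring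
      rw [h]
      exact Subalgebra.sub_mem _ (Subalgebra.mul_mem _ mem_p ih.2)
        (Subalgebra.mul_mem _ (Subalgebra.pow_mem _ mem_u 3) ih.1)
  exact fun m => (key m).1

lemma KL' (m0 m1 m2 : ℕ) (hle : m1 ≤ m0) (h6 : m0 % 6 = m1 % 6) (hpar : (m1 + m2) % 2 = 0) :
    (X 0 : MvPolynomial (Fin 3) K) ^ m0 * X 1 ^ m1 * X 2 ^ m2
      + C ((-1:K)^m2) * (X 0 ^ m1 * X 1 ^ m0 * X 2 ^ m2) ∈ AA K := by
  obtain ⟨m, hm⟩ : ∃ m, m0 = m1 + 6 * m := ⟨(m0 - m1)/6, by omega⟩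
  subst hm
  rcases Nat.even_or_odd m1 with h1 | h1
  · obtain ⟨b, hb⟩ := h1
    obtain ⟨cc, hcc⟩ : Even m2 := by rw [Nat.even_iff]; omega
    have hneg : ((-1:K))^m2 = 1 := Even.neg_one_pow ⟨cc, hcc⟩
    have h : (X 0 : MvPolynomial (Fin 3) K) ^ (m1 + 6*m) * X 1 ^ m1 * X 2 ^ m2
        + C ((-1:K)^m2) * (X 0 ^ m1 * X 1 ^ (m1 + 6*m) * X 2 ^ m2)
        = (X 0 ^ (6*m) + X 1 ^ (6*m)) * ((X 0 * X 1) ^ 2) ^ b * (X 2 ^ 2) ^ cc := by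
      rw [hneg, C_1, one_mul]
      subst hb hcc
      ring
    rw [h]
    exact Subalgebra.mul_mem _ (Subalgebra.mul_mem _ (qmem m) (Subalgebra.pow_mem _ mem_u b))
      (Subalgebra.pow_mem _ mem_s cc)
  · obtain ⟨b, hb⟩ := h1
    obtain ⟨cc, hcc⟩ : Odd m2 := by rw [Nat.odd_iff]; omega
    have hneg : ((-1:K))^m2 = -1 := Odd.neg_one_pow ⟨cc, hcc⟩
    have h : (X 0 : MvPolynomial (Fin 3) K) ^ (m1 + 6*m) * X 1 ^ m1 * X 2 ^ m2
        + C ((-1:K)^m2) * (X 0 ^ m1 * X 1 ^ (m1 + 6*m) * X 2 ^ m2)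
        = ((X 0 ^ (6*m) - X 1 ^ (6*m)) * (X 0 * X 1) * X 2)
            * (((X 0 * X 1) ^ 2) ^ b * (X 2 ^ 2) ^ cc) := by
      rw [hneg, map_neg, C_1, neg_one_mul]
      subst hb hcc
      ring
    rw [h]
    exact Subalgebra.mul_mem _ (rmem m)
      (Subalgebra.mul_mem _ (Subalgebra.pow_mem _ mem_u b) (Subalgebra.pow_mem _ mem_s cc))

lemma KL (m0 m1 m2 : ℕ) (h6 : m0 % 6 = m1 % 6) (hpar : (m1 + m2) % 2 = 0) :
    (X 0 : MvPolynomial (Fin 3) K) ^ m0 * X 1 ^ m1 * X 2 ^ m2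
      + C ((-1:K)^m2) * (X 0 ^ m1 * X 1 ^ m0 * X 2 ^ m2) ∈ AA K := by
  rcases le_total m1 m0 with hle | hle
  · exact KL' m0 m1 m2 hle h6 hpar
  · have h := KL' (K := K) m1 m0 m2 hle h6.symm (by omega)
    have hsq : (C ((-1:K)^m2) : MvPolynomial (Fin 3) K) * C ((-1:K)^m2) = 1 := by
      rw [← C_mul, ← pow_add, ← two_mul, pow_mul, neg_one_sq, one_pow, C_1]
    have heq : (X 0 : MvPolynomial (Fin 3) K) ^ m0 * X 1 ^ m1 * X 2 ^ m2
        + C ((-1:K)^m2) * (X 0 ^ m1 * X 1 ^ m0 * X 2 ^ m2)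
        = C ((-1:K)^m2) * ((X 0 : MvPolynomial (Fin 3) K) ^ m1 * X 1 ^ m0 * X 2 ^ m2
            + C ((-1:K)^m2) * (X 0 ^ m0 * X 1 ^ m1 * X 2 ^ m2)) := by
      linear_combination (X 0 : MvPolynomial (Fin 3) K) ^ m0 * X 1 ^ m1 * X 2 ^ m2 * hsq.symm
    rw [heq]
    have hC : (C ((-1:K)^m2) : MvPolynomial (Fin 3) K) ∈ AA K := by
      simpa using Subalgebra.algebraMap_mem (AA K) ((-1:K)^m2)
    exact Subalgebra.mul_mem _ hC h

lemma geo6 (ω : Kˣ) (hω : orderOf ω = 6) (p q : ℕ) :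
    (∑ i ∈ Finset.range 6, (((ω:K)⁻¹)^p * (ω:K)^q)^i)
      = if p % 6 = q % 6 then (6:K) else 0 := by
  have hω6 : ω ^ 6 = 1 := by rw [← hω, pow_orderOf_eq_one]
  set ζ : Kˣ := (ω⁻¹)^p * ω^q with hζ
  have hcoe : (((ω:K)⁻¹)^p * (ω:K)^q) = (ζ : K) := by
    simp [hζ]
  rw [hcoe]
  have hζ6 : ζ ^ 6 = 1 := by
    rw [hζ, mul_pow, ← pow_mul, ← pow_mul, mul_comm p 6, mul_comm q 6, pow_mul, pow_mul,
      hω6, inv_pow, hω6]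
    simp
  by_cases h : p % 6 = q % 6
  · have hone : ζ = 1 := by
      rw [hζ, inv_pow, inv_mul_eq_one]
      rw [pow_eq_pow_iff_modEq, hω]
      exact h
    rw [hone, if_pos h]
    simp [Finset.sum_range_succ]
  · have hζ1 : ζ ≠ 1 := by
      intro hc
      apply h
      rw [hζ, inv_pow, inv_mul_eq_one] at hc
      have := (pow_eq_pow_iff_modEq.mp hc)
      rw [hω] at this
      exact this
    have hK1 : (ζ : K) ≠ 1 := fun hc => hζ1 (Units.ext hc)
    rw [if_neg h, geom_sum_eq hK1]
    have h6 : ((ζ:K))^6 = 1 := by rw [← Units.val_pow_eq_pow_val, hζ6]; rfl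
    rw [h6, sub_self, zero_div]

lemma geo2 (n : ℕ) :
    (∑ e ∈ Finset.range 2, ((-1:K)^n)^e) = if n % 2 = 0 then (2:K) else 0 := by
  rcases Nat.even_or_odd n with h | h
  · rw [h.neg_one_pow, if_pos (Nat.even_iff.mp h)]
    simp [Finset.sum_range_succ]
  · rw [h.neg_one_pow, if_neg (by simpa [Nat.odd_iff] using h)]
    simp [Finset.sum_range_succ]

noncomputable def V0 (ω : Kˣ) (i e : ℕ) : Fin 3 → MvPolynomial (Fin 3) K :=
  ![C (((ω:K)⁻¹)^i) * X 0, C ((-1:K)^e * (ω:K)^i) * X 1, C ((-1:K)^e) * X 2]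

noncomputable def V1 (ω : Kˣ) (i e : ℕ) : Fin 3 → MvPolynomial (Fin 3) K :=
  ![C ((-1:K)^e * (ω:K)^i) * X 1, C (((ω:K)⁻¹)^i) * X 0, C ((-1:K)^(e+1)) * X 2]

lemma aeval_V0_monomial (ω : Kˣ) (i e : ℕ) (m : Fin 3 →₀ ℕ) (c : K) :
    aeval (V0 ω i e) (monomial m c) =
      C (c * (((ω:K)⁻¹)^(m 0) * (ω:K)^(m 1))^i * ((-1:K)^(m 1 + m 2))^e) *
        (X 0 ^ m 0 * X 1 ^ m 1 * X 2 ^ m 2) := by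
  rw [monomial_eq, Finsupp.prod_pow, Fin.prod_univ_three]
  simp only [map_mul, map_pow, aeval_C, aeval_X, V0, Matrix.cons_val_zero, Matrix.cons_val_one,
    Matrix.head_cons, Matrix.cons_val_two, Matrix.tail_cons, algebraMap_eq,
    pow_add, C_mul, C_pow, C_neg, C_1]
  ring

lemma aeval_V1_monomial (ω : Kˣ) (i e : ℕ) (m : Fin 3 →₀ ℕ) (c : K) :
    aeval (V1 ω i e) (monomial m c) =
      C ((c * (-1:K)^(m 2)) * (((ω:K)⁻¹)^(m 1) * (ω:K)^(m 0))^i * ((-1:K)^(m 0 + m 2))^e) *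
        (X 0 ^ m 1 * X 1 ^ m 0 * X 2 ^ m 2) := by
  rw [monomial_eq, Finsupp.prod_pow, Fin.prod_univ_three]
  simp only [map_mul, map_pow, aeval_C, aeval_X, V1, Matrix.cons_val_zero, Matrix.cons_val_one,
    Matrix.head_cons, Matrix.cons_val_two, Matrix.tail_cons, algebraMap_eq,
    pow_add, C_mul, C_pow, C_neg, C_1]
  ring

lemma hsum (c : K) (z w : K) (M : MvPolynomial (Fin 3) K) :
    ∑ i ∈ Finset.range 6, ∑ e ∈ Finset.range 2, C (c * z^i * w^e) * M
      = C (c * (∑ i ∈ Finset.range 6, z^i) * (∑ e ∈ Finset.range 2, w^e)) * M := by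
  rw [mul_assoc, Finset.sum_mul_sum, Finset.mul_sum, map_sum, Finset.sum_mul]
  refine Finset.sum_congr rfl fun i _ => ?_
  rw [Finset.mul_sum, map_sum, Finset.sum_mul]
  refine Finset.sum_congr rfl fun e _ => ?_
  rw [mul_assoc]

lemma Tmem (ω : Kˣ) (hω : orderOf ω = 6) (m : Fin 3 →₀ ℕ) (c : K) :
    (∑ i ∈ Finset.range 6, ∑ e ∈ Finset.range 2,
      (aeval (V0 ω i e) (monomial m c) + aeval (V1 ω i e) (monomial m c))) ∈ AA K := by
  simp only [aeval_V0_monomial, aeval_V1_monomial, Finset.sum_add_distrib]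
  rw [hsum, hsum, geo6 ω hω (m 0) (m 1), geo6 ω hω (m 1) (m 0),
    geo2 (m 1 + m 2), geo2 (m 0 + m 2)]
  by_cases h6 : m 0 % 6 = m 1 % 6
  · by_cases h2 : (m 1 + m 2) % 2 = 0
    · rw [if_pos h6, if_pos h6.symm, if_pos h2, if_pos (show (m 0 + m 2) % 2 = 0 by omega)]
      have heq : C (c * 6 * 2) * (X 0 ^ m 0 * X 1 ^ m 1 * X 2 ^ m 2)
          + C ((c * (-1:K)^(m 2)) * 6 * 2) * (X 0 ^ m 1 * X 1 ^ m 0 * X 2 ^ m 2)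
          = C (c * 6 * 2) *
            ((X 0 : MvPolynomial (Fin 3) K) ^ m 0 * X 1 ^ m 1 * X 2 ^ m 2
              + C ((-1:K)^(m 2)) * (X 0 ^ m 1 * X 1 ^ m 0 * X 2 ^ m 2)) := by
        simp only [C_mul]
        ring
      rw [heq]
      have hC : (C (c * 6 * 2) : MvPolynomial (Fin 3) K) ∈ AA K := by
        simpa using Subalgebra.algebraMap_mem (AA K) (c * 6 * 2)
      exact Subalgebra.mul_mem _ hC (KL (m 0) (m 1) (m 2) h6 h2)
    · have h2' : ¬(m 0 + m 2) % 2 = 0 := by omega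
      simp only [if_neg h2, if_neg h2', mul_zero, zero_mul, map_zero, add_zero, zero_add]
      exact Subalgebra.zero_mem _
  · have h6' : ¬ m 1 % 6 = m 0 % 6 := by omega
    simp only [if_neg h6, if_neg h6', mul_zero, zero_mul, map_zero, add_zero, zero_add]
    exact Subalgebra.zero_mem _

lemma aeval_aeval (v w : Fin 3 → MvPolynomial (Fin 3) K) (f : MvPolynomial (Fin 3) K) :
    aeval v (aeval w f) = aeval (fun k => aeval v (w k)) f :=
  AlgHom.congr_fun (comp_aeval w (aeval v)) f

lemma fixed (ω : Kˣ) (f : MvPolynomial (Fin 3) K)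
    (ha : aeval ![C ((ω : K)⁻¹) * X 0, C (ω : K) * X 1, (X 2 : MvPolynomial (Fin 3) K)] f = f)
    (hb : aeval ![(X 0 : MvPolynomial (Fin 3) K), -X 1, -X 2] f = f)
    (hc : aeval ![(X 1 : MvPolynomial (Fin 3) K), X 0, -X 2] f = f) :
    ∀ e i, aeval (V0 ω i e) f = f ∧ aeval (V1 ω i e) f = f := by
  have stepa : ∀ (v : Fin 3 → MvPolynomial (Fin 3) K), aeval v f = f →
      aeval (fun k => aeval ![C ((ω : K)⁻¹) * X 0, C (ω : K) * X 1,
        (X 2 : MvPolynomial (Fin 3) K)] (v k)) f = f := by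
    intro v hv
    rw [← aeval_aeval, hv, ha]
  have stepb : ∀ (v : Fin 3 → MvPolynomial (Fin 3) K), aeval v f = f →
      aeval (fun k => aeval ![(X 0 : MvPolynomial (Fin 3) K), -X 1, -X 2] (v k)) f = f := by
    intro v hv
    rw [← aeval_aeval, hv, hb]
  intro e
  induction e with
  | zero =>
    intro i
    induction i with
    | zero =>
      constructor
      · have h : V0 ω 0 0 = (X : Fin 3 → MvPolynomial (Fin 3) K) := by
          funext k; fin_cases k <;> simp [V0]
        rw [h, aeval_X_left_apply]
      · have h : V1 ω 0 0 = ![(X 1 : MvPolynomial (Fin 3) K), X 0, -X 2] := by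
          funext k; fin_cases k <;> simp [V1]
        rw [h, hc]
    | succ i ih =>
      constructor
      · have h : V0 ω (i+1) 0 = fun k => aeval ![C ((ω : K)⁻¹) * X 0, C (ω : K) * X 1,
            (X 2 : MvPolynomial (Fin 3) K)] (V0 ω i 0 k) := by
          funext k; fin_cases k <;>
            simp [V0, pow_succ, mul_comm, mul_assoc, mul_left_comm]
        rw [h]; exact stepa _ ih.1
      · have h : V1 ω (i+1) 0 = fun k => aeval ![C ((ω : K)⁻¹) * X 0, C (ω : K) * X 1,
            (X 2 : MvPolynomial (Fin 3) K)] (V1 ω i 0 k) := by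
          funext k; fin_cases k <;>
            simp [V1, pow_succ, mul_comm, mul_assoc, mul_left_comm]
        rw [h]; exact stepa _ ih.2
  | succ e ih =>
    intro i
    constructor
    · have h : V0 ω i (e+1) = fun k => aeval ![(X 0 : MvPolynomial (Fin 3) K), -X 1, -X 2]
          (V0 ω i e k) := by
        funext k; fin_cases k <;>
          simp [V0, pow_succ, mul_comm, mul_assoc, mul_left_comm]
      rw [h]; exact stepb _ (ih i).1
    · have h : V1 ω i (e+1) = fun k => aeval ![(X 0 : MvPolynomial (Fin 3) K), -X 1, -X 2]
          (V1 ω i e k) := by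
        funext k; fin_cases k <;>
          simp [V1, pow_succ, mul_comm, mul_assoc, mul_left_comm]
      rw [h]; exact stepb _ (ih i).2

lemma fix_of_mem (v : Fin 3 → MvPolynomial (Fin 3) K)
    (hgen : ∀ g ∈ gens K, aeval v g = g) (f : MvPolynomial (Fin 3) K)
    (hf : f ∈ Algebra.adjoin K (gens K)) : aeval v f = f := by
  have h : Algebra.adjoin K (gens K) ≤ AlgHom.equalizer (aeval v) (AlgHom.id K _) :=
    Algebra.adjoin_le (fun g hg => hgen g hg)
  exact h hf

lemma backward (ω : Kˣ) (hω : orderOf ω = 6) (f : MvPolynomial (Fin 3) K)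
    (hf : f ∈ Algebra.adjoin K (gens K)) :
    (aeval ![C ((ω : K)⁻¹) * X 0, C (ω : K) * X 1, (X 2 : MvPolynomial (Fin 3) K)] f = f ∧
     aeval ![(X 0 : MvPolynomial (Fin 3) K), -X 1, -X 2] f = f ∧
     aeval ![(X 1 : MvPolynomial (Fin 3) K), X 0, -X 2] f = f) := by
  have hω6 : (ω : K) ^ 6 = 1 := by
    have h : ω ^ 6 = 1 := by rw [← hω, pow_orderOf_eq_one]
    rw [← Units.val_pow_eq_pow_val, h, Units.val_one]
  have hinv : (C ((ω:K)⁻¹) : MvPolynomial (Fin 3) K) * C (ω:K) = 1 := by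
    rw [← C_mul, inv_mul_cancel₀ (Units.ne_zero ω), C_1]
  have hp6 : (C ((ω:K)) : MvPolynomial (Fin 3) K) ^ 6 = 1 := by
    rw [← C_pow, hω6, C_1]
  have hp6' : (C ((ω:K)⁻¹) : MvPolynomial (Fin 3) K) ^ 6 = 1 := by
    rw [← C_pow, inv_pow, hω6, inv_one, C_1]
  refine ⟨fix_of_mem _ ?_ f hf, fix_of_mem _ ?_ f hf, fix_of_mem _ ?_ f hf⟩
  · intro g hg
    rcases hg with h | h | h | h <;> subst h <;>
        simp only [map_mul, map_pow, map_add, map_sub, aeval_X, Matrix.cons_val_zero,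
          Matrix.cons_val_one, Matrix.head_cons, Matrix.cons_val_two, Matrix.tail_cons]
    · linear_combination ((C ((ω:K)⁻¹) * C ((ω:K)) + 1) * (X 0 * X 1)^2) * hinv
    · linear_combination ((X 0 : MvPolynomial (Fin 3) K)^6) * hp6'
        + ((X 1 : MvPolynomial (Fin 3) K)^6) * hp6
    · linear_combination ((X 0 : MvPolynomial (Fin 3) K)^6 * (C ((ω:K)⁻¹) * C ((ω:K)))
          * (X 0 * X 1) * X 2) * hp6'
        + (- (X 1 : MvPolynomial (Fin 3) K)^6 * (C ((ω:K)⁻¹) * C ((ω:K))) * (X 0 * X 1) * X 2)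
          * hp6
        + ((X 0^6 - X 1^6) * (X 0 * X 1) * X 2) * hinv
  · intro g hg
    rcases hg with h | h | h | h <;> subst h <;>
      simp only [map_mul, map_pow, map_add, map_sub, aeval_X, Matrix.cons_val_zero,
        Matrix.cons_val_one, Matrix.head_cons, Matrix.cons_val_two, Matrix.tail_cons] <;> ring
  · intro g hg
    rcases hg with h | h | h | h <;> subst h <;>
      simp only [map_mul, map_pow, map_add, map_sub, aeval_X, Matrix.cons_val_zero,
        Matrix.cons_val_one, Matrix.head_cons, Matrix.cons_val_two, Matrix.tail_cons] <;> ring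

lemma h24ne (ω : Kˣ) (hω : orderOf ω = 6) : (24:K) ≠ 0 := by
  have hω6 : (ω : K) ^ 6 = 1 := by
    have h : ω ^ 6 = 1 := by rw [← hω, pow_orderOf_eq_one]
    rw [← Units.val_pow_eq_pow_val, h, Units.val_one]
  have hdvd : ∀ k : ℕ, (ω:K)^k = 1 → 6 ∣ k := by
    intro k hk
    have h : ω ^ k = 1 := Units.ext (by simpa using hk)
    rw [← hω]
    exact orderOf_dvd_of_pow_eq_one h
  have h2 : (2:K) ≠ 0 := by
    intro h
    have hsq : (ω:K)^3 * (ω:K)^3 = 1 := by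
      rw [← pow_add]; exact hω6
    rcases mul_self_eq_one_iff.mp hsq with h1 | h1
    · exact (by norm_num : ¬ (6:ℕ) ∣ 3) (hdvd 3 h1)
    · have hone : (ω:K)^3 = 1 := by rw [h1]; linear_combination -h
      exact (by norm_num : ¬ (6:ℕ) ∣ 3) (hdvd 3 hone)
  have h3 : (3:K) ≠ 0 := by
    intro h
    have hζ : ((ω:K)^2)^3 = 1 := by rw [← pow_mul]; exact hω6
    have hz : ((ω:K)^2 - 1)^3 = 0 := by
      linear_combination hζ + (-((ω:K)^4) + (ω:K)^2) * h
    have hz' : (ω:K)^2 - 1 = 0 := pow_eq_zero_iff (by norm_num) |>.mp hz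
    have h1 : (ω:K)^2 = 1 := by linear_combination hz'
    exact (by norm_num : ¬ (6:ℕ) ∣ 2) (hdvd 2 h1)
  have h24 : (24:K) = 2*2*2*3 := by norm_num
  rw [h24]
  exact mul_ne_zero (mul_ne_zero (mul_ne_zero h2 h2) h2) h3

lemma forward (ω : Kˣ) (hω : orderOf ω = 6) (f : MvPolynomial (Fin 3) K)
    (ha : aeval ![C ((ω : K)⁻¹) * X 0, C (ω : K) * X 1, (X 2 : MvPolynomial (Fin 3) K)] f = f)
    (hb : aeval ![(X 0 : MvPolynomial (Fin 3) K), -X 1, -X 2] f = f)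
    (hc : aeval ![(X 1 : MvPolynomial (Fin 3) K), X 0, -X 2] f = f) :
    f ∈ Algebra.adjoin K (gens K) := by
  have hfix := fixed ω f ha hb hc
  have h24 := h24ne ω hω
  have h1 : ∑ i ∈ Finset.range 6, ∑ e ∈ Finset.range 2,
      (aeval (V0 ω i e) f + aeval (V1 ω i e) f) = C (24:K) * f := by
    rw [Finset.sum_congr rfl (fun i _ => Finset.sum_congr rfl
      (fun e _ => by rw [(hfix e i).1, (hfix e i).2]))]
    simp only [Finset.sum_const, Finset.card_range, nsmul_eq_mul, map_ofNat]
    push_cast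
    ring
  have hf' : ∀ v : Fin 3 → MvPolynomial (Fin 3) K,
      aeval v f = ∑ m ∈ f.support, aeval v (monomial m (coeff m f)) := by
    intro v
    conv_lhs => rw [f.as_sum]
    rw [map_sum]
  have h3 : ∑ i ∈ Finset.range 6, ∑ e ∈ Finset.range 2,
        (aeval (V0 ω i e) f + aeval (V1 ω i e) f)
      = ∑ m ∈ f.support, ∑ i ∈ Finset.range 6, ∑ e ∈ Finset.range 2,
          (aeval (V0 ω i e) (monomial m (coeff m f))
            + aeval (V1 ω i e) (monomial m (coeff m f))) := by
    calc ∑ i ∈ Finset.range 6, ∑ e ∈ Finset.range 2,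
          (aeval (V0 ω i e) f + aeval (V1 ω i e) f)
        = ∑ i ∈ Finset.range 6, ∑ e ∈ Finset.range 2, ∑ m ∈ f.support,
            (aeval (V0 ω i e) (monomial m (coeff m f))
              + aeval (V1 ω i e) (monomial m (coeff m f))) := by
          refine Finset.sum_congr rfl fun i _ => Finset.sum_congr rfl fun e _ => ?_
          rw [hf' (V0 ω i e), hf' (V1 ω i e), ← Finset.sum_add_distrib]
      _ = ∑ i ∈ Finset.range 6, ∑ m ∈ f.support, ∑ e ∈ Finset.range 2,
            (aeval (V0 ω i e) (monomial m (coeff m f))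
              + aeval (V1 ω i e) (monomial m (coeff m f))) :=
          Finset.sum_congr rfl fun i _ => Finset.sum_comm
      _ = _ := Finset.sum_comm
  have h2 : C (24:K) * f ∈ AA K := by
    rw [← h1, h3]
    exact Subalgebra.sum_mem _ fun m _ => Tmem ω hω m (coeff m f)
  have hfinal : f = C ((24:K)⁻¹) * (C (24:K) * f) := by
    rw [← mul_assoc, ← C_mul, inv_mul_cancel₀ h24, C_1, one_mul]
  rw [hfinal]
  have hC : (C ((24:K)⁻¹) : MvPolynomial (Fin 3) K) ∈ AA K := by
    simpa using Subalgebra.algebraMap_mem (AA K) ((24:K)⁻¹)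
  exact Subalgebra.mul_mem _ hC h2

end StmtAux

/-- For `G = (C6 × C2) ⋊ C2` acting on `K[x1,x2,t]` (with `x1 = X 0`, `x2 = X 1`, `t = X 2`)
via `a·x1 = ω⁻¹x1, a·x2 = ωx2, a·t = t`; `b·x1 = x1, b·x2 = −x2, b·t = −t`;
`c·x1 = x2, c·x2 = x1, c·t = −t`, the invariant ring is generated by
`(x1x2)^2`, `x1^6 + x2^6`, `t^2` and `(x1^6 − x2^6)x1x2t`.  A polynomial is `G`-invariant
iff it is fixed by the substitutions corresponding to the three generators `a, b, c`. -/
theorem stmt3 {K : Type*} [Field K] (ω : Kˣ) (hω : orderOf ω = 6) :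
    ∀ f : MvPolynomial (Fin 3) K,
      (aeval ![C ((ω : K)⁻¹) * X 0, C (ω : K) * X 1, (X 2 : MvPolynomial (Fin 3) K)] f = f ∧
       aeval ![(X 0 : MvPolynomial (Fin 3) K), -X 1, -X 2] f = f ∧
       aeval ![(X 1 : MvPolynomial (Fin 3) K), X 0, -X 2] f = f) ↔
      f ∈ Algebra.adjoin K
        ({(X 0 * X 1) ^ 2, X 0 ^ 6 + X 1 ^ 6, X 2 ^ 2,
          (X 0 ^ 6 - X 1 ^ 6) * (X 0 * X 1) * X 2} : Set (MvPolynomial (Fin 3) K)) := by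
  intro f
  constructor
  · rintro ⟨ha, hb, hc⟩
    exact StmtAux.forward ω hω f ha hb hc
  · intro hf
    exact StmtAux.backward ω hω f hf
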